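/- For 1 < p ≤ 2 and any two vectors x, y in ℝ^N, one has (1 + |x|^2 + |y|^2)^((2-p)/2) · ((|x|^(p-2)x - |y|^(p-2)y) · (x - y)) ≥ (p - 1)|x - y|^2. -/

import Mathlib

open Real Set

lemma anti_aux {p c M : ℝ} (hp2 : p ≤ 2) (hc : 0 < c) (hcM : c ^ 2 ≤ M) :
    M ^ ((p - 2) / 2) ≤ c ^ (p - 2) := by
  have hM : (0:ℝ) < M := lt_of_lt_of_le (by positivity) hcM
  have h1 : c ≤ Real.sqrt M := (Real.le_sqrt hc.le hM.le).mpr hcM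
  have h2 : Real.sqrt M ^ (p - 2) ≤ c ^ (p - 2) :=
    Real.rpow_le_rpow_of_nonpos hc h1 (by linarith)
  calc M ^ ((p - 2) / 2) = (M ^ ((1:ℝ)/2)) ^ (p - 2) := by
        rw [← Real.rpow_mul hM.le]; ring_nf
    _ = Real.sqrt M ^ (p - 2) := by rw [Real.sqrt_eq_rpow]
    _ ≤ c ^ (p - 2) := h2

lemma mvt_aux {p a b M : ℝ} (hp1 : 1 < p) (hp2 : p ≤ 2) (hb : 0 ≤ b) (hba : b < a)
    (haM : a ^ 2 ≤ M) :
    (p - 1) * M ^ ((p - 2) / 2) * (a - b) ≤ a ^ (p - 1) - b ^ (p - 1) := by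
  obtain ⟨c, hc, hceq⟩ := exists_hasDerivAt_eq_slope (fun t => t ^ (p - 1))
    (fun t => (p - 1) * t ^ (p - 1 - 1)) hba
    (fun t ht => (Real.continuousAt_rpow_const t (p - 1) (Or.inr (by linarith))).continuousWithinAt)
    (fun t ht => Real.hasDerivAt_rpow_const (Or.inl (ne_of_gt (lt_of_le_of_lt hb ht.1))))
  have hc0 : 0 < c := lt_of_le_of_lt hb hc.1
  have hcM : c ^ 2 ≤ M := le_trans (by nlinarith [hc.2, hc0.le]) haM
  have h1 : M ^ ((p - 2) / 2) ≤ c ^ (p - 1 - 1) := by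
    have := anti_aux hp2 hc0 hcM
    convert this using 2; ring
  have hab : 0 < a - b := by linarith
  have h2 : a ^ (p - 1) - b ^ (p - 1) = (p - 1) * c ^ (p - 1 - 1) * (a - b) := by
    field_simp at hceq
    linarith [hceq]
  rw [h2]
  have hp0 : 0 ≤ p - 1 := by linarith
  exact mul_le_mul_of_nonneg_right (mul_le_mul_of_nonneg_left h1 hp0) hab.le

lemma core_aux {p a b t : ℝ} (hp1 : 1 < p) (hp2 : p ≤ 2) (hb : 0 ≤ b) (hba : b ≤ a)
    (ht : |t| ≤ a * b) :
    (1 + a ^ 2 + b ^ 2) ^ ((p - 2) / 2) * ((p - 1) * (a ^ 2 - 2 * t + b ^ 2)) ≤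
      a ^ (p - 2) * a ^ 2 + b ^ (p - 2) * b ^ 2 - (a ^ (p - 2) + b ^ (p - 2)) * t := by
  have ha : 0 ≤ a := le_trans hb hba
  have hMa : a ^ 2 ≤ 1 + a ^ 2 + b ^ 2 := by nlinarith
  have hMb : b ^ 2 ≤ 1 + a ^ 2 + b ^ 2 := by nlinarith
  have hM0 : (0:ℝ) < 1 + a ^ 2 + b ^ 2 := by positivity
  have hs0 : 0 < (1 + a ^ 2 + b ^ 2) ^ ((p - 2) / 2) := Real.rpow_pos_of_pos hM0 _
  set s := (1 + a ^ 2 + b ^ 2) ^ ((p - 2) / 2) with hs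
  rcases eq_or_lt_of_le ha with h0 | ha0
  · -- a = 0, hence b = 0, t = 0
    have hb0 : b = 0 := le_antisymm (h0 ▸ hba) hb
    have ht0 : t = 0 := by
      have h1 := abs_nonneg t; rw [← h0, hb0] at ht
      exact abs_eq_zero.mp (le_antisymm (by simpa using ht) h1)
    rw [← h0, hb0, ht0]; simp
  rcases eq_or_lt_of_le hb with hb0 | hb0
  · -- b = 0, t = 0
    have ht0 : t = 0 := by
      rw [← hb0] at ht; simp at ht
      exact abs_eq_zero.mp (le_antisymm (by simpa using ht) (abs_nonneg t))
    rw [← hb0, ht0]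
    have hsa : s ≤ a ^ (p - 2) := anti_aux hp2 ha0 hMa
    have h2 : s * a ^ 2 ≤ a ^ (p - 2) * a ^ 2 :=
      mul_le_mul_of_nonneg_right hsa (sq_nonneg a)
    have h3 : s * ((p - 1) * (a ^ 2 - 2 * 0 + 0 ^ 2)) ≤ s * a ^ 2 := by
      nlinarith [mul_nonneg hs0.le (sq_nonneg a)]
    have h4 : (0:ℝ) ^ (p - 2) * (0:ℝ) ^ 2 = 0 := by simp
    rw [h4]
    nlinarith [h2, h3]
  -- 0 < b ≤ a
  have hsa : s ≤ a ^ (p - 2) := anti_aux hp2 ha0 hMa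
  have hsb : s ≤ b ^ (p - 2) := anti_aux hp2 hb0 hMb
  have hkey : (p - 1) * s * (a - b) ≤ a ^ (p - 1) - b ^ (p - 1) := by
    rcases eq_or_lt_of_le hba with h | h
    · rw [h]; simp
    · exact mvt_aux hp1 hp2 hb0.le h hMa
  have hAa : a ^ (p - 2) * a = a ^ (p - 1) := by
    rw [← Real.rpow_add_one ha0.ne']; congr 1; ring
  have hBb : b ^ (p - 2) * b = b ^ (p - 1) := by
    rw [← Real.rpow_add_one hb0.ne']; congr 1; ring
  have htab : t ≤ a * b := le_trans (le_abs_self t) ht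
  have hiden : a ^ (p - 2) * a ^ 2 + b ^ (p - 2) * b ^ 2 - (a ^ (p - 2) + b ^ (p - 2)) * t
      = (a ^ (p - 1) - b ^ (p - 1)) * (a - b)
        + (a ^ (p - 2) + b ^ (p - 2)) * (a * b - t) := by
    have e1 : a ^ (p - 2) * a ^ 2 = a ^ (p - 1) * a := by rw [← hAa]; ring
    have e2 : b ^ (p - 2) * b ^ 2 = b ^ (p - 1) * b := by rw [← hBb]; ring
    have e3 : a ^ (p - 2) * (a * b) = a ^ (p - 1) * b := by rw [← hAa]; ring
    have e4 : b ^ (p - 2) * (a * b) = b ^ (p - 1) * a := by rw [← hBb]; ring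
    linear_combination e1 + e2 - e3 - e4
  have hcoef : 2 * (s * (p - 1)) ≤ a ^ (p - 2) + b ^ (p - 2) := by
    nlinarith [hs0.le]
  have h5 : 2 * (s * (p - 1)) * (a * b - t) ≤ (a ^ (p - 2) + b ^ (p - 2)) * (a * b - t) :=
    mul_le_mul_of_nonneg_right hcoef (sub_nonneg.mpr htab)
  have h4 : (p - 1) * s * (a - b) * (a - b) ≤ (a ^ (p - 1) - b ^ (p - 1)) * (a - b) :=
    mul_le_mul_of_nonneg_right hkey (sub_nonneg.mpr hba)
  rw [hiden]
  nlinarith [h4, h5]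

theorem stmt_3 (N : ℕ) (p : ℝ) (hp1 : 1 < p) (hp2 : p ≤ 2) (x y : EuclideanSpace ℝ (Fin N)) :
    (p - 1) * ‖x - y‖ ^ 2 ≤
      (1 + ‖x‖ ^ 2 + ‖y‖ ^ 2) ^ ((2 - p) / 2) *
        inner ℝ ((‖x‖ ^ (p - 2)) • x - (‖y‖ ^ (p - 2)) • y) (x - y) := by
  have ha : 0 ≤ ‖x‖ := norm_nonneg x
  have hb : 0 ≤ ‖y‖ := norm_nonneg y
  have hM0 : (0:ℝ) < 1 + ‖x‖ ^ 2 + ‖y‖ ^ 2 := by positivity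
  have hE : (inner ℝ ((‖x‖ ^ (p - 2)) • x - (‖y‖ ^ (p - 2)) • y) (x - y) : ℝ) =
      ‖x‖ ^ (p - 2) * ‖x‖ ^ 2 + ‖y‖ ^ (p - 2) * ‖y‖ ^ 2
        - (‖x‖ ^ (p - 2) + ‖y‖ ^ (p - 2)) * (inner ℝ x y : ℝ) := by
    simp only [inner_sub_left, inner_sub_right, real_inner_smul_left,
      real_inner_self_eq_norm_sq, real_inner_comm y x]
    try ring
  have hns : ‖x - y‖ ^ 2 = ‖x‖ ^ 2 - 2 * (inner ℝ x y : ℝ) + ‖y‖ ^ 2 := by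
    rw [norm_sub_sq_real]; try ring
  have ht : |(inner ℝ x y : ℝ)| ≤ ‖x‖ * ‖y‖ := abs_real_inner_le_norm x y
  have hcore : (1 + ‖x‖ ^ 2 + ‖y‖ ^ 2) ^ ((p - 2) / 2) *
        ((p - 1) * (‖x‖ ^ 2 - 2 * (inner ℝ x y : ℝ) + ‖y‖ ^ 2)) ≤
      ‖x‖ ^ (p - 2) * ‖x‖ ^ 2 + ‖y‖ ^ (p - 2) * ‖y‖ ^ 2
        - (‖x‖ ^ (p - 2) + ‖y‖ ^ (p - 2)) * (inner ℝ x y : ℝ) := by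
    rcases le_total ‖y‖ ‖x‖ with h | h
    · exact core_aux hp1 hp2 hb h ht
    · have h2 := core_aux hp1 hp2 ha h (by rwa [mul_comm] at ht)
      have e : (1 + ‖y‖ ^ 2 + ‖x‖ ^ 2 : ℝ) = 1 + ‖x‖ ^ 2 + ‖y‖ ^ 2 := by ring
      rw [e] at h2
      linarith [h2]
  have hone : (1 + ‖x‖ ^ 2 + ‖y‖ ^ 2) ^ ((2 - p) / 2) *
      (1 + ‖x‖ ^ 2 + ‖y‖ ^ 2) ^ ((p - 2) / 2) = 1 := by
    rw [← Real.rpow_add hM0]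
    have e : (2 - p) / 2 + (p - 2) / 2 = 0 := by ring
    rw [e, Real.rpow_zero]
  have hr0 : 0 < (1 + ‖x‖ ^ 2 + ‖y‖ ^ 2) ^ ((2 - p) / 2) := Real.rpow_pos_of_pos hM0 _
  rw [hE, hns]
  calc (p - 1) * (‖x‖ ^ 2 - 2 * (inner ℝ x y : ℝ) + ‖y‖ ^ 2)
      = (1 + ‖x‖ ^ 2 + ‖y‖ ^ 2) ^ ((2 - p) / 2) *
        ((1 + ‖x‖ ^ 2 + ‖y‖ ^ 2) ^ ((p - 2) / 2) *
          ((p - 1) * (‖x‖ ^ 2 - 2 * (inner ℝ x y : ℝ) + ‖y‖ ^ 2))) := by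
        rw [← mul_assoc, hone, one_mul]
    _ ≤ _ := mul_le_mul_of_nonneg_left hcore hr0.le
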